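/- Let U be an interleaved double chain of words and let V = f₁(U) be its f₁-lift. Then V₁V₂V₃V₄ = U₆⁻¹ · (U₈U₁U₂U₃U₄) and V₂V₃V₄V₅ = (U₂U₃U₄U₅U₆) · U₈⁻¹. Consequently, any nonempty balanced subword of U₁U₂U₃U₄ or of U₂U₃U₄U₅ occurs as a subword of a concatenation of four consecutive parts of V. -/
import Mathlib


/-- Letterwise reversal of a word over an alphabet with reversal `inv`. -/
def wrev {A : Type*} (inv : A → A) (W : List A) : List A := (W.map inv).reverse

/-- An interleaved double chain (indices mod 8). -/
def IDC {A : Type*} (inv : A → A) (U : ZMod 8 → List A) : Prop :=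
  ∀ i : ZMod 8, U i ++ U (i + 1) = wrev inv (U (i + 4) ++ U (i + 5))

/-- The `f_k`-lift: for `j ≡ k (mod 4)` replace `U_j` by `(U_{j+3}U_{j+4}U_{j+5})⁻¹`,
and keep the remaining parts. -/
def flift {A : Type*} (inv : A → A) (k : ZMod 8) (U : ZMod 8 → List A) :
    ZMod 8 → List A :=
  fun j =>
    if j = k ∨ j = k + 4 then wrev inv (U (j + 3) ++ U (j + 4) ++ U (j + 5)) else U j

/-- A word is balanced when each letter occurs as often as its reverse, i.e. it is
a permutation of its own reversal. -/
def WBalanced {A : Type*} (inv : A → A) (W : List A) : Prop :=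
  W.Perm (wrev inv W)

lemma wrev_append {A : Type*} (inv : A → A) (X Y : List A) :
    wrev inv (X ++ Y) = wrev inv Y ++ wrev inv X := by
  simp [wrev]

theorem stmt15 {A : Type*} (inv : A → A) (hinv : Function.Involutive inv)
    (U : ZMod 8 → List A) (hU : IDC inv U) :
    ∀ V : ZMod 8 → List A, V = flift inv 1 U →
      (V 1 ++ V 2 ++ V 3 ++ V 4 =
        wrev inv (U 6) ++ (U 8 ++ U 1 ++ U 2 ++ U 3 ++ U 4)) ∧
      (V 2 ++ V 3 ++ V 4 ++ V 5 =
        (U 2 ++ U 3 ++ U 4 ++ U 5 ++ U 6) ++ wrev inv (U 8)) ∧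
      (∀ S : List A, S ≠ [] → WBalanced inv S →
        (S <:+: (U 1 ++ U 2 ++ U 3 ++ U 4) ∨ S <:+: (U 2 ++ U 3 ++ U 4 ++ U 5)) →
        ∃ i : ZMod 8, S <:+: (V i ++ V (i + 1) ++ V (i + 2) ++ V (i + 3))) := by
  intro V hV
  subst hV
  have h8 : (8 : ZMod 8) = 0 := by decide
  have hV1 : flift inv 1 U 1 = wrev inv (U 4 ++ U 5 ++ U 6) := by
    show (if _ then _ else _) = _
    rw [if_pos (by decide : (1 : ZMod 8) = 1 ∨ (1 : ZMod 8) = 1 + 4)]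
    norm_num
  have hV5 : flift inv 1 U 5 = wrev inv (U 0 ++ U 1 ++ U 2) := by
    show (if _ then _ else _) = _
    rw [if_pos (by decide : (5 : ZMod 8) = 1 ∨ (5 : ZMod 8) = 1 + 4)]
    have e1 : (5 : ZMod 8) + 3 = 0 := by decide
    have e2 : (5 : ZMod 8) + 4 = 1 := by decide
    have e3 : (5 : ZMod 8) + 5 = 2 := by decide
    rw [e1, e2, e3]
  have hV2 : flift inv 1 U 2 = U 2 := by
    show (if _ then _ else _) = _
    rw [if_neg (by decide : ¬((2 : ZMod 8) = 1 ∨ (2 : ZMod 8) = 1 + 4))]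
  have hV3 : flift inv 1 U 3 = U 3 := by
    show (if _ then _ else _) = _
    rw [if_neg (by decide : ¬((3 : ZMod 8) = 1 ∨ (3 : ZMod 8) = 1 + 4))]
  have hV4 : flift inv 1 U 4 = U 4 := by
    show (if _ then _ else _) = _
    rw [if_neg (by decide : ¬((4 : ZMod 8) = 1 ∨ (4 : ZMod 8) = 1 + 4))]
  have hU0 : wrev inv (U 4 ++ U 5) = U 0 ++ U 1 := by
    have := hU 0
    have e1 : (0 : ZMod 8) + 1 = 1 := by decide
    have e2 : (0 : ZMod 8) + 4 = 4 := by decide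
    have e3 : (0 : ZMod 8) + 5 = 5 := by decide
    rw [e1, e2, e3] at this
    exact this.symm
  have hU5 : wrev inv (U 1 ++ U 2) = U 5 ++ U 6 := by
    have := hU 5
    have e1 : (5 : ZMod 8) + 1 = 6 := by decide
    have e2 : (5 : ZMod 8) + 4 = 1 := by decide
    have e3 : (5 : ZMod 8) + 5 = 2 := by decide
    rw [e1, e2, e3] at this
    exact this.symm
  have key1 : flift inv 1 U 1 ++ flift inv 1 U 2 ++ flift inv 1 U 3 ++ flift inv 1 U 4 =
      wrev inv (U 6) ++ (U 8 ++ U 1 ++ U 2 ++ U 3 ++ U 4) := by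
    rw [hV1, hV2, hV3, hV4, wrev_append, hU0, h8]
    simp [List.append_assoc]
  have key2 : flift inv 1 U 2 ++ flift inv 1 U 3 ++ flift inv 1 U 4 ++ flift inv 1 U 5 =
      (U 2 ++ U 3 ++ U 4 ++ U 5 ++ U 6) ++ wrev inv (U 8) := by
    rw [hV2, hV3, hV4, hV5, List.append_assoc (U 0), wrev_append, hU5, h8]
    simp [List.append_assoc]
  refine ⟨key1, key2, ?_⟩
  intro S _ _ h
  rcases h with h | h
  · refine ⟨1, ?_⟩
    have e1 : (1 : ZMod 8) + 1 = 2 := by decide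
    have e2 : (1 : ZMod 8) + 2 = 3 := by decide
    have e3 : (1 : ZMod 8) + 3 = 4 := by decide
    rw [e1, e2, e3, key1]
    refine h.trans ⟨wrev inv (U 6) ++ U 8, [], by simp⟩
  · refine ⟨2, ?_⟩
    have e1 : (2 : ZMod 8) + 1 = 3 := by decide
    have e2 : (2 : ZMod 8) + 2 = 4 := by decide
    have e3 : (2 : ZMod 8) + 3 = 5 := by decide
    rw [e1, e2, e3, key2]
    exact h.trans ⟨[], U 6 ++ wrev inv (U 8), by simp⟩
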